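/- Let f be an entire function on ℂ such that f(z) ≠ 0 and f''(z) ≠ 0 for all z ∈ ℂ, and assume f is of finite order (i.e., log log M(r,f) = O(log r), where M(r,f) = max_{|z|=r} |f(z)|). Then there exist constants A, B ∈ ℂ with f(z) = exp(Az + B) for all z. -/

import Mathlib

open Filter Topology Metric Polynomial

/-- Existence of a holomorphic logarithm of a nonvanishing entire function. -/
theorem exists_log_of_nonvanishing (f : ℂ → ℂ) (hf : Differentiable ℂ f)
    (h0 : ∀ z, f z ≠ 0) :
    ∃ g : ℂ → ℂ, Differentiable ℂ g ∧ ∀ z, Complex.exp (g z) = f z := by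
  have hderiv : Differentiable ℂ (deriv f) := by
    have := (hf.differentiableOn.analyticOnNhd isOpen_univ).deriv
    rw [← differentiableOn_univ]
    exact this.differentiableOn
  set h : ℂ → ℂ := fun z => deriv f z / f z with hh
  have hhdiff : Differentiable ℂ h := hderiv.div hf h0
  have hhcont : Continuous h := hhdiff.continuous
  set g : ℂ → ℂ := fun z => Complex.log (f 0) + ∫ t in (0:ℝ)..1, z * h ((t:ℂ) * z) with hg
  -- exp (g z) = f z
  have key : ∀ z, Complex.exp (g z) = f z := by
    intro z
    set F : ℝ → ℂ := fun s => ∫ t in (0:ℝ)..s, z * h ((t:ℂ) * z) with hF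
    have hcont : Continuous fun t : ℝ => z * h ((t:ℂ) * z) := by fun_prop
    have hFderiv : ∀ s : ℝ, HasDerivAt F (z * h ((s:ℂ) * z)) s := fun s =>
      (hcont.integral_hasStrictDerivAt 0 s).hasDerivAt
    set ψ : ℝ → ℂ := fun s => f ((s:ℂ) * z) * Complex.exp (-(Complex.log (f 0) + F s)) with hψ
    have hfsz : ∀ s : ℝ, HasDerivAt (fun s : ℝ => f ((s:ℂ) * z)) (z * deriv f ((s:ℂ) * z)) s := by
      intro s
      have h1 : HasDerivAt (fun w : ℂ => f (w * z)) (deriv f ((s:ℂ) * z) * z) ((s:ℂ)) := by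
        exact (hf.differentiableAt.hasDerivAt.comp (s:ℂ)
          (hasDerivAt_mul_const (x := (s:ℂ)) z))
      simpa [mul_comm] using h1.comp_ofReal
    have hψderiv : ∀ s : ℝ, HasDerivAt ψ 0 s := by
      intro s
      have h2 : HasDerivAt (fun s : ℝ => Complex.exp (-(Complex.log (f 0) + F s)))
          (-(z * h ((s:ℂ) * z)) * Complex.exp (-(Complex.log (f 0) + F s))) s := by
        have h3 : HasDerivAt (fun s : ℝ => -(Complex.log (f 0) + F s)) (-(z * h ((s:ℂ) * z))) s := by
          exact ((hFderiv s).const_add (Complex.log (f 0))).neg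
        simpa [mul_comm, zero_add] using h3.cexp
      have h4 := (hfsz s).mul h2
      have h5 : h ((s:ℂ) * z) * f ((s:ℂ) * z) = deriv f ((s:ℂ) * z) := by
        rw [hh]; exact div_mul_cancel₀ _ (h0 _)
      have h6 : z * deriv f ((s:ℂ) * z) * Complex.exp (-(Complex.log (f 0) + F s)) +
          f ((s:ℂ) * z) * (-(z * h ((s:ℂ) * z)) * Complex.exp (-(Complex.log (f 0) + F s))) = 0 := by
        rw [← h5]; ring
      exact h6 ▸ h4
    have hconst : ψ 1 = ψ 0 :=
      is_const_of_deriv_eq_zero (fun s => (hψderiv s).differentiableAt)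
        (fun s => (hψderiv s).deriv) 1 0
    have hF0 : F 0 = 0 := intervalIntegral.integral_same
    have hψ0 : ψ 0 = 1 := by
      simp [hψ, hF0, Complex.exp_add, Complex.exp_neg, Complex.exp_log (h0 0),
        mul_inv_cancel₀ (h0 0)]
    have hψ1 : ψ 1 = 1 := hconst.trans hψ0
    have : f z * Complex.exp (-(g z)) = 1 := by
      simpa [hψ, hg, hF] using hψ1
    have := congrArg (fun w => w * Complex.exp (g z)) this
    simpa [mul_assoc, ← Complex.exp_add] using this.symm
  have hgcont : Continuous g := by
    have : Continuous fun z : ℂ => ∫ t in (0:ℝ)..1, z * h ((t:ℂ) * z) := by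
      apply intervalIntegral.continuous_parametric_intervalIntegral_of_continuous'
        (f := fun (z : ℂ) (t : ℝ) => z * h ((t:ℂ) * z)) (μ := MeasureTheory.volume) ?_ 0 1
      fun_prop
    exact continuous_const.add this
  refine ⟨g, fun z₀ => ?_, key⟩
  -- local expression of `g` via `Complex.log`
  have hfz₀ : f z₀ ≠ 0 := h0 z₀
  set φ : ℂ → ℂ := fun z => g z₀ + Complex.log (f z / f z₀) with hφ
  have hU : ∀ᶠ z in 𝓝 z₀, ‖g z - g z₀‖ < Real.pi ∧ f z / f z₀ ∈ Complex.slitPlane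
      ∧ 0 ≤ (f z / f z₀).re := by
    have hc1 : ContinuousAt (fun z => ‖g z - g z₀‖) z₀ := by fun_prop
    have e1 : ∀ᶠ z in 𝓝 z₀, ‖g z - g z₀‖ < Real.pi := by
      have := hc1.eventually_lt continuousAt_const (by simpa using Real.pi_pos)
      simpa using this
    have hc2 : ContinuousAt (fun z => (f z / f z₀).re) z₀ := by
      apply Complex.continuous_re.continuousAt.comp
      exact (hf.continuous.continuousAt).div continuousAt_const hfz₀
    have e2 : ∀ᶠ z in 𝓝 z₀, 0 < (f z / f z₀).re := by
      have := ContinuousAt.eventually_lt (f := fun _ : ℂ => (0:ℝ)) continuousAt_const hc2 ?_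
      · exact this
      · simp [div_self hfz₀]
    filter_upwards [e1, e2] with z h1 h2
    exact ⟨h1, Complex.mem_slitPlane_iff.mpr (Or.inl h2), le_of_lt h2⟩
  have heq : ∀ᶠ z in 𝓝 z₀, g z = φ z := by
    filter_upwards [hU] with z hz
    obtain ⟨h1, h2, h3⟩ := hz
    have hw : f z / f z₀ ≠ 0 := div_ne_zero (h0 z) hfz₀
    have hexp : Complex.exp (g z - g z₀) = f z / f z₀ := by
      rw [Complex.exp_sub, key z, key z₀]
    have : Complex.exp (g z - g z₀) = Complex.exp (Complex.log (f z / f z₀)) := by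
      rw [hexp, Complex.exp_log hw]
    obtain ⟨n, hn⟩ := Complex.exp_eq_exp_iff_exists_int.mp this
    have him : (g z - g z₀).im = (Complex.log (f z / f z₀)).im + n * (2 * Real.pi) := by
      have := congrArg Complex.im hn
      simpa [Complex.add_im, Complex.mul_im, Complex.mul_re] using this
    have harg : |Complex.arg (f z / f z₀)| ≤ Real.pi / 2 :=
      Complex.abs_arg_le_pi_div_two_iff.mpr h3
    have him1 : |(g z - g z₀).im| ≤ ‖g z - g z₀‖ := Complex.abs_im_le_norm _
    have hn0 : n = 0 := by
      by_contra hn0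
      have h2pi : 2 * Real.pi ≤ |(n:ℝ)| * (2 * Real.pi) := by
        have : (1:ℝ) ≤ |(n:ℝ)| := by
          have h : (1:ℤ) ≤ |n| := Int.one_le_abs (by exact_mod_cast hn0)
          calc (1:ℝ) ≤ ((|n| : ℤ) : ℝ) := by exact_mod_cast h
          _ = |(n:ℝ)| := by push_cast; ring
        nlinarith [Real.pi_pos]
      have habs : |(n:ℝ) * (2 * Real.pi)| = |(n:ℝ)| * (2*Real.pi) := by
        rw [abs_mul, abs_of_pos (show (0:ℝ) < 2*Real.pi by positivity)]
      have hb : |(n:ℝ) * (2 * Real.pi)| ≤ |(g z - g z₀).im| + |(Complex.log (f z / f z₀)).im| := by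
        have : (n:ℝ) * (2*Real.pi) = (g z - g z₀).im - (Complex.log (f z / f z₀)).im := by
          rw [him]; ring
        rw [this]
        exact abs_sub _ _
      have hlogim : |(Complex.log (f z / f z₀)).im| ≤ Real.pi / 2 := by
        rwa [Complex.log_im]
      nlinarith [Real.pi_pos]
    have : g z - g z₀ = Complex.log (f z / f z₀) := by
      rw [hn, hn0]; simp
    rw [hφ]
    simp only
    rw [← this]; ring
  have hφdiff : DifferentiableAt ℂ φ z₀ := by
    apply DifferentiableAt.add (differentiableAt_const _)
    apply DifferentiableAt.clog
    · exact (hf.differentiableAt).div (differentiableAt_const _) hfz₀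
    · apply Complex.mem_slitPlane_iff.mpr
      left
      simp [div_self hfz₀]
  exact (Filter.EventuallyEq.differentiableAt_iff heq).mpr hφdiff

theorem borel_caratheodory (g : ℂ → ℂ) (hg : Differentiable ℂ g) (hg0 : g 0 = 0)
    {R A : ℝ} (hR : 0 < R) (hA : 0 < A)
    (hre : ∀ w : ℂ, ‖w‖ ≤ R → (g w).re ≤ A) :
    ∀ z : ℂ, ‖z‖ ≤ R / 2 → ‖g z‖ ≤ 2 * A := by
  set D : ℂ → ℂ := fun z => ((2 * A : ℝ) : ℂ) - g z with hD
  have hDre : ∀ z : ℂ, ‖z‖ ≤ R → A ≤ (D z).re := by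
    intro z hz
    have := hre z hz
    simp only [hD, Complex.sub_re, Complex.ofReal_re]
    linarith
  have hDne : ∀ z : ℂ, ‖z‖ ≤ R → D z ≠ 0 := by
    intro z hz hzero
    have := hDre z hz
    rw [hzero] at this
    simp at this
    linarith
  set w : ℂ → ℂ := fun z => g z / D z with hw
  have hwd : DifferentiableOn ℂ w (ball (0:ℂ) R) := by
    apply DifferentiableOn.div hg.differentiableOn
      ((differentiable_const _).sub hg).differentiableOn
    intro z hz
    exact hDne z (le_of_lt (by simpa using hz))
  have hw0 : w 0 = 0 := by simp [hw, hg0]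
  have hwle : ∀ z : ℂ, ‖z‖ ≤ R → ‖w z‖ ≤ 1 := by
    intro z hz
    rw [hw]
    simp only
    rw [norm_div, div_le_one_iff]
    left
    constructor
    · have := hDre z hz
      have h1 : (0:ℝ) < (D z).re := lt_of_lt_of_le hA this
      calc (0:ℝ) < (D z).re := h1
      _ ≤ ‖D z‖ := Complex.re_le_norm _
    · -- ‖g z‖ ≤ ‖D z‖
      have hx := hre z hz
      have : ‖g z‖ ^ 2 ≤ ‖D z‖ ^ 2 := by
        rw [Complex.sq_norm, Complex.sq_norm]
        simp only [Complex.normSq_apply, hD, Complex.sub_re, Complex.sub_im,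
          Complex.ofReal_re, Complex.ofReal_im, zero_sub]
        nlinarith
      exact by
        have h2 := (pow_le_pow_iff_left₀ (norm_nonneg (g z)) (norm_nonneg (D z)) two_ne_zero).mp ?_
        · exact h2
        · simpa using this
  -- Schwarz lemma bound
  intro z hz
  have hzR : ‖z‖ ≤ R := le_trans hz (by linarith)
  have hzball : z ∈ ball (0:ℂ) R := by
    simp only [mem_ball, dist_zero_right]
    linarith [hz, hR]
  have hwhalf : ‖w z‖ ≤ 1 / 2 := by
    apply le_of_forall_pos_le_add
    intro ε hε
    have hmaps : Set.MapsTo w (ball (0:ℂ) R) (ball (w 0) (1 + ε)) := by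
      intro x hx
      rw [hw0, mem_ball, dist_zero_right]
      have := hwle x (le_of_lt (by simpa using hx))
      linarith
    have := Complex.dist_le_div_mul_dist_of_mapsTo_ball hwd (hmaps.mono_right Metric.ball_subset_closedBall) hzball
    rw [hw0, dist_zero_right, dist_zero_right] at this
    calc ‖w z‖ ≤ (1 + ε) / R * ‖z‖ := this
    _ ≤ (1 + ε) / R * (R / 2) := by
        apply mul_le_mul_of_nonneg_left hz
        positivity
    _ = (1 + ε) / 2 := by field_simp
    _ ≤ 1 / 2 + ε := by linarith
  have h1w : (1:ℝ) / 2 ≤ ‖1 + w z‖ := by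
    have h3 : (1:ℝ) = ‖(1:ℂ)‖ := by simp
    have h4 : ‖(1:ℂ)‖ ≤ ‖1 + w z‖ + ‖w z‖ := by
      calc ‖(1:ℂ)‖ = ‖(1 + w z) - w z‖ := by ring_nf
      _ ≤ ‖1 + w z‖ + ‖w z‖ := norm_sub_le _ _
    rw [← h3] at h4
    linarith
  have hgz : g z = w z * D z := by
    rw [hw]
    exact (div_mul_cancel₀ _ (hDne z hzR)).symm
  have hsum : (1 + w z) * D z = ((2 * A : ℝ) : ℂ) := by
    rw [hw]
    simp only
    field_simp [hDne z hzR]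
    norm_cast
    try ring
  have h1wne : (1 : ℂ) + w z ≠ 0 := by
    intro hc
    rw [hc] at h1w
    simp at h1w
    linarith
  have hDval : ‖D z‖ ≤ 4 * A := by
    have : D z = ((2 * A : ℝ) : ℂ) / (1 + w z) := by
      rw [eq_div_iff h1wne]
      linear_combination hsum
    rw [this, norm_div]
    have h2A : ‖((2 * A : ℝ) : ℂ)‖ = 2 * A := by
      rw [Complex.norm_real, Real.norm_eq_abs, abs_of_pos (by linarith)]
    rw [h2A]
    rw [div_le_iff₀ (by linarith : (0:ℝ) < ‖1 + w z‖)]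
    nlinarith
  calc ‖g z‖ = ‖w z‖ * ‖D z‖ := by rw [hgz, norm_mul]
  _ ≤ (1/2) * (4 * A) := by
      apply mul_le_mul hwhalf hDval (norm_nonneg _) (by norm_num)
  _ = 2 * A := by ring

theorem poly_liouville (n : ℕ) : ∀ (g : ℂ → ℂ), Differentiable ℂ g →
    ∀ C : ℝ, (∀ z : ℂ, 1 ≤ ‖z‖ → ‖g z‖ ≤ C * ‖z‖ ^ n) →
    ∃ P : Polynomial ℂ, ∀ z, g z = Polynomial.eval z P := by
  induction n with
  | zero =>
    intro g hg C hbound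
    obtain ⟨M, hM⟩ := (isCompact_closedBall (0:ℂ) 1).exists_bound_of_continuousOn
      hg.continuous.continuousOn
    have hb : Bornology.IsBounded (Set.range g) := by
      apply (Metric.isBounded_closedBall (x := (0:ℂ)) (r := max M C)).subset
      rintro _ ⟨z, rfl⟩
      rw [mem_closedBall_zero_iff]
      rcases le_total ‖z‖ 1 with h | h
      · exact le_trans (hM z (by simpa using h)) (le_max_left _ _)
      · have := hbound z h
        simp only [pow_zero, mul_one] at this
        exact le_trans this (le_max_right _ _)
    obtain ⟨c, hc⟩ := hg.exists_eq_const_of_bounded hb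
    exact ⟨Polynomial.C c, fun z => by simp [congrFun hc z]⟩
  | succ n ih =>
    intro g hg C hbound
    set g₁ : ℂ → ℂ := dslope g 0 with hg₁
    have hd : Differentiable ℂ g₁ := by
      rw [← differentiableOn_univ]
      exact (Complex.differentiableOn_dslope (Filter.univ_mem)).mpr hg.differentiableOn
    have hkey : ∀ z : ℂ, z * g₁ z = g z - g 0 := by
      intro z
      have := sub_smul_dslope g 0 z
      simpa [smul_eq_mul] using this
    have hb1 : ∀ z : ℂ, 1 ≤ ‖z‖ → ‖g₁ z‖ ≤ (C + ‖g 0‖) * ‖z‖ ^ n := by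
      intro z hz
      have ht : (0:ℝ) < ‖z‖ := lt_of_lt_of_le one_pos hz
      have hmul : ‖z‖ * ‖g₁ z‖ = ‖g z - g 0‖ := by
        rw [← norm_mul, hkey z]
      have h2 : ‖g z - g 0‖ ≤ C * ‖z‖ ^ (n+1) + ‖g 0‖ :=
        le_trans (norm_sub_le _ _) (by linarith [hbound z hz])
      have h3 : 1 ≤ ‖z‖ ^ (n+1) := one_le_pow₀ hz
      have h4 : ‖z‖ * ‖g₁ z‖ ≤ ‖z‖ * ((C + ‖g 0‖) * ‖z‖ ^ n) := by
        rw [hmul]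
        have : ‖z‖ * ((C + ‖g 0‖) * ‖z‖ ^ n) = (C + ‖g 0‖) * ‖z‖ ^ (n+1) := by ring
        rw [this]
        nlinarith [norm_nonneg (g 0)]
      exact le_of_mul_le_mul_left h4 ht
    obtain ⟨Q, hQ⟩ := ih g₁ hd (C + ‖g 0‖) hb1
    refine ⟨Polynomial.C (g 0) + Polynomial.X * Q, fun z => ?_⟩
    have := hkey z
    simp only [Polynomial.eval_add, Polynomial.eval_mul, Polynomial.eval_C, Polynomial.eval_X]
    rw [← hQ]
    linear_combination -this

/-- Hayman's theorem on `f f''` (finite-order case): if `f` is entire of finite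
order and `f` and `f''` have no zeros then `f(z) = exp (A z + B)`. -/
theorem hayman_ff'' (f : ℂ → ℂ)
    (hf : Differentiable ℂ f)
    (hfinord : ∃ C ρ : ℝ, 0 < C ∧ 0 < ρ ∧ ∀ᶠ r : ℝ in atTop,
      ∀ z : ℂ, ‖z‖ ≤ r → ‖f z‖ ≤ Real.exp (C * r ^ ρ))
    (h0 : ∀ z, f z ≠ 0)
    (h2 : ∀ z, deriv (deriv f) z ≠ 0) :
    ∃ A B : ℂ, ∀ z, f z = Complex.exp (A * z + B) := by
  obtain ⟨g, hgd, hgf⟩ := exists_log_of_nonvanishing f hf h0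
  obtain ⟨C, ρ, hC, hρ, hev⟩ := hfinord
  obtain ⟨r₀, hr₀⟩ := eventually_atTop.mp hev
  set s₀ : ℝ := max r₀ 1 with hs₀
  have hs₀1 : (1:ℝ) ≤ s₀ := le_max_right _ _
  set n : ℕ := ⌈ρ⌉₊ with hn
  have hρn : ρ ≤ (n : ℝ) := Nat.le_ceil ρ
  -- growth bound via Borel–Carathéodory
  have hgrow : ∀ z : ℂ, s₀ ≤ ‖z‖ →
      ‖g z - g 0‖ ≤ 2 * (C * (2 * ‖z‖) ^ ρ + ‖g 0‖ + 1) := by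
    intro z hz
    have hzpos : (0:ℝ) < ‖z‖ := lt_of_lt_of_le one_pos (le_trans hs₀1 hz)
    set R : ℝ := 2 * ‖z‖ with hR
    have hRr₀ : r₀ ≤ R := by
      have : r₀ ≤ s₀ := le_max_left _ _
      nlinarith
    have hRpos : (0:ℝ) < R := by positivity
    set A : ℝ := C * R ^ ρ + ‖g 0‖ + 1 with hA
    have hApos : (0:ℝ) < A := by positivity
    have hre : ∀ w : ℂ, ‖w‖ ≤ R → ((fun w => g w - g 0) w).re ≤ A := by
      intro w hw
      have hfw : ‖f w‖ ≤ Real.exp (C * R ^ ρ) := hr₀ R hRr₀ w hw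
      have : Real.exp ((g w).re) ≤ Real.exp (C * R ^ ρ) := by
        rw [← Complex.norm_exp (g w)]
        rw [hgf w] at *
        exact hfw
      have h1 : (g w).re ≤ C * R ^ ρ := Real.exp_le_exp.mp this
      have h2' : -(g 0).re ≤ ‖g 0‖ := by
        calc -(g 0).re ≤ |(g 0).re| := neg_le_abs _
        _ ≤ ‖g 0‖ := Complex.abs_re_le_norm _
      simp only [Complex.sub_re]
      linarith
    have := borel_caratheodory (fun w => g w - g 0) (hgd.sub_const _) (by simp)
      hRpos hApos hre z (by rw [hR]; linarith)
    simpa using this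
  -- convert to a polynomial bound
  obtain ⟨M, hM⟩ := (isCompact_closedBall (0:ℂ) s₀).exists_bound_of_continuousOn
    hgd.continuous.continuousOn
  set C₄ : ℝ := 2 * C * 2 ^ n + 3 * ‖g 0‖ + 2 + max M 0 with hC₄
  have hbound : ∀ z : ℂ, 1 ≤ ‖z‖ → ‖g z‖ ≤ C₄ * ‖z‖ ^ n := by
    intro z hz1
    have hz1n : (1:ℝ) ≤ ‖z‖ ^ n := one_le_pow₀ hz1
    rcases le_total ‖z‖ s₀ with h | h
    · have := hM z (by simpa [mem_closedBall, dist_zero_right] using h)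
      have hM0 : ‖g z‖ ≤ max M 0 := le_trans this (le_max_left _ _)
      calc ‖g z‖ ≤ max M 0 := hM0
      _ ≤ max M 0 * ‖z‖ ^ n := le_mul_of_one_le_right (le_max_right _ _) hz1n
      _ ≤ C₄ * ‖z‖ ^ n := by
          apply mul_le_mul_of_nonneg_right _ (by positivity)
          have : (0:ℝ) ≤ 2 * C * 2 ^ n + 3 * ‖g 0‖ + 2 := by positivity
          rw [hC₄]
          linarith
    · have hb := hgrow z h
      have hrpow : (2 * ‖z‖) ^ ρ ≤ 2 ^ n * ‖z‖ ^ n := by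
        have h1 : (1:ℝ) ≤ 2 * ‖z‖ := by nlinarith
        calc (2 * ‖z‖) ^ ρ ≤ (2 * ‖z‖) ^ (n : ℝ) :=
          Real.rpow_le_rpow_of_exponent_le h1 hρn
        _ = (2 * ‖z‖) ^ n := by rw [Real.rpow_natCast]
        _ = 2 ^ n * ‖z‖ ^ n := mul_pow _ _ _
      have h3 : ‖g z‖ ≤ ‖g z - g 0‖ + ‖g 0‖ := by
        calc ‖g z‖ = ‖(g z - g 0) + g 0‖ := by ring_nf
        _ ≤ ‖g z - g 0‖ + ‖g 0‖ := norm_add_le _ _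
      have h4 : ‖g z‖ ≤ 2 * C * (2 ^ n * ‖z‖ ^ n) + 3 * ‖g 0‖ + 2 := by nlinarith
      calc ‖g z‖ ≤ 2 * C * (2 ^ n * ‖z‖ ^ n) + 3 * ‖g 0‖ + 2 := h4
      _ ≤ C₄ * ‖z‖ ^ n := by
          rw [hC₄]
          have h5 : (0:ℝ) ≤ M ⊔ 0 := le_max_right M 0
          have h6 : (0:ℝ) ≤ ‖g 0‖ := norm_nonneg _
          nlinarith [mul_nonneg (by nlinarith : (0:ℝ) ≤ 3 * ‖g 0‖ + 2 + M ⊔ 0)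
            (by linarith : (0:ℝ) ≤ ‖z‖ ^ n - 1)]
  obtain ⟨P, hP⟩ := poly_liouville n g hgd C₄ hbound
  -- `f = exp (eval · P)`
  have hfP : f = fun z => Complex.exp (Polynomial.eval z P) := by
    funext z
    rw [← hgf z, hP z]
  have hf1 : ∀ z : ℂ, HasDerivAt f
      (Complex.exp (eval z P) * eval z (derivative P)) z := by
    intro z
    rw [hfP]
    exact (Polynomial.hasDerivAt P z).cexp
  have hderiv1 : deriv f = fun z => Complex.exp (eval z P) * eval z (derivative P) :=
    funext fun z => (hf1 z).deriv
  have hf2 : ∀ z : ℂ, HasDerivAt (deriv f)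
      (Complex.exp (eval z P) * eval z (derivative P) * eval z (derivative P)
        + Complex.exp (eval z P) * eval z (derivative (derivative P))) z := by
    intro z
    rw [hderiv1]
    exact ((Polynomial.hasDerivAt P z).cexp).mul (Polynomial.hasDerivAt (derivative P) z)
  set q : Polynomial ℂ := (derivative P) ^ 2 + derivative (derivative P) with hq
  have hqne : ∀ z : ℂ, eval z q ≠ 0 := by
    intro z hzero
    apply h2 z
    rw [(hf2 z).deriv]
    have : eval z ((derivative P) ^ 2) + eval z (derivative (derivative P)) = 0 := by
      rw [← Polynomial.eval_add, ← hq]; exact hzero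
    rw [Polynomial.eval_pow] at this
    ring_nf
    ring_nf at this
    rw [← mul_add]
    rw [this, mul_zero]
  -- the derivative of P is constant
  have hPdeg : natDegree (derivative P) = 0 := by
    by_contra hne
    have hk : 0 < natDegree (derivative P) := Nat.pos_of_ne_zero hne
    have h2k : natDegree ((derivative P) ^ 2) = 2 * natDegree (derivative P) :=
      natDegree_pow _ _
    have hlt : natDegree (derivative (derivative P)) < natDegree ((derivative P) ^ 2) := by
      rw [h2k]
      calc natDegree (derivative (derivative P)) ≤ natDegree (derivative P) - 1 :=
        natDegree_derivative_le _
      _ < 2 * natDegree (derivative P) := by omega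
    have hqdeg : natDegree q = 2 * natDegree (derivative P) := by
      rw [hq, natDegree_add_eq_left_of_natDegree_lt hlt, h2k]
    have hqpos : 0 < degree q := by
      rw [← Polynomial.natDegree_pos_iff_degree_pos, hqdeg]
      omega
    obtain ⟨z, hz⟩ := Complex.exists_root hqpos
    exact hqne z hz
  obtain ⟨b, hb⟩ : ∃ b, derivative P = Polynomial.C b :=
    ⟨_, Polynomial.eq_C_of_natDegree_eq_zero hPdeg⟩
  have hlin : derivative (P - Polynomial.C b * Polynomial.X) = 0 := by
    rw [derivative_sub, hb]
    simp
  have hPc : natDegree (P - Polynomial.C b * Polynomial.X) = 0 :=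
    Polynomial.natDegree_eq_zero_of_derivative_eq_zero hlin
  obtain ⟨c, hc⟩ : ∃ c, P - Polynomial.C b * Polynomial.X = Polynomial.C c :=
    ⟨_, Polynomial.eq_C_of_natDegree_eq_zero hPc⟩
  refine ⟨b, c, fun z => ?_⟩
  have hPz : P = Polynomial.C b * Polynomial.X + Polynomial.C c := by
    rw [← hc]; ring
  rw [hfP]
  simp only [hPz, Polynomial.eval_add, Polynomial.eval_mul, Polynomial.eval_C, Polynomial.eval_X]
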